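/- Randomized appreciation rate (Corollary 1): let a be a random variable independent of the Brownian driver Z, with P(a ≠ r) > 0, and let the portfolio satisfy the proportion μ_c/μ_p = (1 − Φ(d_p))/Φ(d_c). Then E[X_T] > e^{rT}·X₀, where X_T = μ_p(K_p − S_T)⁺ + μ_c(S_T − K_c)⁺ with S_T = S₀·exp(aT − σ²T/2 + σ√T·Z). -/

import Mathlib

open MeasureTheory ProbabilityTheory Real Set

/-- Standard normal CDF. -/
noncomputable def Phi (x : ℝ) : ℝ :=
  ∫ y in Set.Iic x, (Real.sqrt (2 * Real.pi))⁻¹ * Real.exp (-(y ^ 2) / 2)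

/-- Standard normal density. -/
noncomputable def phi (y : ℝ) : ℝ := (Real.sqrt (2 * Real.pi))⁻¹ * Real.exp (-(y ^ 2) / 2)

/-- Black-Scholes d value. -/
noncomputable def dBS (S₀ K r T σ : ℝ) : ℝ :=
  (Real.log (S₀ / K) + T * (r + σ ^ 2 / 2)) / (σ * Real.sqrt T)

/-- Black-Scholes call price (closed form). -/
noncomputable def callBS (S₀ K r T σ : ℝ) : ℝ :=
  S₀ * Phi (dBS S₀ K r T σ) - K * Real.exp (-(r * T)) * Phi (dBS S₀ K r T σ - σ * Real.sqrt T)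

/-- Black-Scholes put price (via put-call parity). -/
noncomputable def putBS (S₀ K r T σ : ℝ) : ℝ :=
  callBS S₀ K r T σ - S₀ + K * Real.exp (-(r * T))

lemma my_phi_pos (y : ℝ) : 0 < phi y := by
  unfold phi
  positivity

lemma my_phi_cont : Continuous phi := by
  unfold phi; fun_prop

lemma my_integrable_phi : Integrable phi := by
  have h : phi = fun y => (Real.sqrt (2 * Real.pi))⁻¹ * Real.exp (-(1/2 : ℝ) * y ^ 2) := by
    funext y; unfold phi; ring_nf
  rw [h]
  exact (integrable_exp_neg_mul_sq (by norm_num)).const_mul _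

lemma my_integral_phi : ∫ y, phi y = 1 := by
  unfold phi
  rw [MeasureTheory.integral_const_mul]
  have h : ∀ y : ℝ, Real.exp (-(y ^ 2) / 2) = Real.exp (-(1/2 : ℝ) * y ^ 2) := by
    intro y; ring_nf
  simp_rw [h, integral_gaussian]
  have : Real.sqrt (π / (1/2)) = Real.sqrt (2 * π) := by norm_num [mul_comm]
  rw [this, inv_mul_cancel₀ (by positivity)]

lemma my_exp_mul_phi (s z : ℝ) :
    Real.exp (s * z) * phi z = Real.exp (s ^ 2 / 2) * phi (z - s) := by
  unfold phi
  have h : Real.exp (s * z) * Real.exp (-(z ^ 2) / 2)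
      = Real.exp (s ^ 2 / 2) * Real.exp (-((z - s) ^ 2) / 2) := by
    rw [← Real.exp_add, ← Real.exp_add]; ring_nf
  linear_combination (Real.sqrt (2 * Real.pi))⁻¹ * h

lemma my_setIntegral_Iic_comp_sub (f : ℝ → ℝ) (c s : ℝ) :
    ∫ z in Iic c, f (z - s) = ∫ z in Iic (c - s), f z := by
  have A : MeasurableEmbedding fun x : ℝ => x - s :=
    (Homeomorph.subRight s).isClosedEmbedding.measurableEmbedding
  have := A.setIntegral_map (μ := volume) f (Iic (c - s))
  have hmap : Measure.map (fun x : ℝ => x - s) volume = volume := by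
    simp_rw [sub_eq_add_neg]
    exact map_add_right_eq_self volume (-s)
  rw [hmap] at this
  have hpre : (fun x : ℝ => x - s) ⁻¹' Iic (c - s) = Iic c := by
    ext x; simp [sub_le_sub_iff_right]
  rw [hpre] at this
  exact this.symm

lemma my_Phi_def (x : ℝ) : Phi x = ∫ y in Iic x, phi y := rfl

lemma my_Phi_sub (x y : ℝ) (h : x ≤ y) : Phi y - Phi x = ∫ z in Set.Ioc x y, phi z := by
  rw [my_Phi_def, my_Phi_def, ← Set.Iic_union_Ioc_eq_Iic h,
    MeasureTheory.setIntegral_union (Set.Iic_disjoint_Ioc le_rfl) measurableSet_Ioc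
      my_integrable_phi.integrableOn my_integrable_phi.integrableOn]
  ring

lemma my_setIntegral_phi_pos {s : Set ℝ} (hs : MeasurableSet s) (hpos : 0 < volume s) :
    0 < ∫ z in s, phi z := by
  rw [MeasureTheory.setIntegral_pos_iff_support_of_nonneg_ae
    (Filter.Eventually.of_forall fun z => (my_phi_pos z).le) my_integrable_phi.integrableOn]
  have : Function.support phi = Set.univ := by
    ext z; simp [Function.support, (my_phi_pos z).ne']
  rw [this]
  simpa using hpos

lemma my_strictMono_Phi : StrictMono Phi := by
  intro x y hxy
  have h := my_Phi_sub x y hxy.le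
  have hpos : 0 < ∫ z in Set.Ioc x y, phi z := by
    apply my_setIntegral_phi_pos measurableSet_Ioc
    simp [Real.volume_Ioc, hxy]
  linarith

lemma my_Phi_pos (x : ℝ) : 0 < Phi x := by
  rw [my_Phi_def]
  apply my_setIntegral_phi_pos measurableSet_Iic
  simp [Real.volume_Iic]

lemma my_integral_phi_Ioi (c : ℝ) : ∫ z in Ioi c, phi z = 1 - Phi c := by
  have := MeasureTheory.integral_add_compl (measurableSet_Iic (a := c)) my_integrable_phi
  rw [Set.compl_Iic] at this
  rw [my_integral_phi] at this
  rw [← my_Phi_def] at this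
  linarith

lemma my_Phi_lt_one (x : ℝ) : Phi x < 1 := by
  have h := my_integral_phi_Ioi x
  have hpos : 0 < ∫ z in Ioi x, phi z := by
    apply my_setIntegral_phi_pos measurableSet_Ioi
    simp
  linarith

lemma my_phi_even (z : ℝ) : phi (-z) = phi z := by unfold phi; ring_nf

lemma my_Phi_neg (x : ℝ) : Phi (-x) = 1 - Phi x := by
  rw [my_Phi_def]
  have h : ∫ z in Iic (-x), phi z = ∫ z in Iic (-x), phi (-z) := by
    simp_rw [my_phi_even]
  rw [h, integral_comp_neg_Iic, neg_neg, my_integral_phi_Ioi]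

lemma my_integrable_exp_mul_phi (s : ℝ) : Integrable (fun z => Real.exp (s * z) * phi z) := by
  simp_rw [my_exp_mul_phi]
  exact (my_integrable_phi.comp_sub_right s).const_mul _

lemma my_integral_exp_mul_phi_Iic (s c : ℝ) :
    ∫ z in Iic c, Real.exp (s * z) * phi z = Real.exp (s ^ 2 / 2) * Phi (c - s) := by
  simp_rw [my_exp_mul_phi]
  rw [MeasureTheory.integral_const_mul, my_setIntegral_Iic_comp_sub phi c s, ← my_Phi_def]

lemma my_integral_exp_mul_phi (s : ℝ) :
    ∫ z, Real.exp (s * z) * phi z = Real.exp (s ^ 2 / 2) := by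
  simp_rw [my_exp_mul_phi]
  rw [MeasureTheory.integral_const_mul]
  rw [integral_sub_right_eq_self phi s, my_integral_phi, mul_one]

lemma my_integral_exp_mul_phi_Ioi (s c : ℝ) :
    ∫ z in Ioi c, Real.exp (s * z) * phi z = Real.exp (s ^ 2 / 2) * (1 - Phi (c - s)) := by
  have := MeasureTheory.integral_add_compl (measurableSet_Iic (a := c)) (my_integrable_exp_mul_phi s)
  rw [Set.compl_Iic, my_integral_exp_mul_phi, my_integral_exp_mul_phi_Iic] at this
  linarith [this]

lemma my_hasDerivAt_Phi (x : ℝ) : HasDerivAt Phi (phi x) x := by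
  have hrepr : ∀ y : ℝ, Phi y = Phi 0 + ∫ t in (0:ℝ)..y, phi t := by
    intro y
    rcases le_or_gt 0 y with h | h
    · rw [intervalIntegral.integral_of_le h, ← my_Phi_sub 0 y h]; ring
    · rw [intervalIntegral.integral_of_ge h.le, ← my_Phi_sub y 0 h.le]; ring
  have hD : HasDerivAt (fun y => Phi 0 + ∫ t in (0:ℝ)..y, phi t) (phi x) x := by
    apply HasDerivAt.const_add
    exact intervalIntegral.integral_hasDerivAt_right
      (my_integrable_phi.intervalIntegrable)
      (my_integrable_phi.aestronglyMeasurable.stronglyMeasurableAtFilter)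
      my_phi_cont.continuousAt
  exact hD.congr_of_eventuallyEq (Filter.Eventually.of_forall hrepr)

lemma my_Phi_cont : Continuous Phi := by
  have : ∀ x, HasDerivAt Phi (phi x) x := my_hasDerivAt_Phi
  exact (funext fun _ => rfl : Phi = Phi) ▸ continuous_iff_continuousAt.mpr
    (fun x => (this x).continuousAt)

lemma my_integral_call (S K mu s : ℝ) (hS : 0 < S) (hK : 0 < K) (hs : 0 < s) :
    ∫ z, max (S * Real.exp (mu + s * z) - K) 0 * phi z
      = S * Real.exp (mu + s ^ 2 / 2) * Phi ((Real.log (S / K) + mu) / s + s)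
        - K * Phi ((Real.log (S / K) + mu) / s) := by
  set b := (Real.log (S / K) + mu) / s with hbdef
  have hb : b = (Real.log S - Real.log K + mu) / s := by
    rw [hbdef, Real.log_div hS.ne' hK.ne']
  have key : ∀ z : ℝ, K ≤ S * Real.exp (mu + s * z) ↔ -b ≤ z := by
    intro z
    rw [← Real.log_le_log_iff hK (by positivity),
      Real.log_mul hS.ne' (Real.exp_ne_zero _), Real.log_exp, hb, ← neg_div,
      div_le_iff₀ hs]
    constructor <;> intro h <;> nlinarith
  have hind : (fun z => max (S * Real.exp (mu + s * z) - K) 0 * phi z)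
      = Set.indicator (Ici (-b)) (fun z => (S * Real.exp (mu + s * z) - K) * phi z) := by
    funext z
    by_cases hz : z ∈ Ici (-b)
    · rw [Set.indicator_of_mem hz, max_eq_left (by linarith [(key z).mpr hz])]
    · rw [Set.indicator_of_notMem hz]
      have h2 : S * Real.exp (mu + s * z) - K < 0 := by
        by_contra h3
        exact hz ((key z).mp (by linarith))
      rw [max_eq_right h2.le, zero_mul]
  rw [hind, MeasureTheory.integral_indicator measurableSet_Ici,
    MeasureTheory.integral_Ici_eq_integral_Ioi]
  have hsplit : ∀ z : ℝ, (S * Real.exp (mu + s * z) - K) * phi z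
      = (S * Real.exp mu) * (Real.exp (s * z) * phi z) - K * phi z := by
    intro z; rw [Real.exp_add]; ring
  simp_rw [hsplit]
  rw [MeasureTheory.integral_sub (((my_integrable_exp_mul_phi s).const_mul _).integrableOn)
    ((my_integrable_phi.const_mul K).integrableOn),
    MeasureTheory.integral_const_mul, MeasureTheory.integral_const_mul,
    my_integral_exp_mul_phi_Ioi, my_integral_phi_Ioi]
  have h1 : (1 : ℝ) - Phi (-b - s) = Phi (b + s) := by
    rw [show -b - s = -(b + s) by ring, my_Phi_neg]; ring
  have h2 : (1 : ℝ) - Phi (-b) = Phi b := by rw [my_Phi_neg]; ring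
  rw [h1, h2, Real.exp_add]
  ring

lemma my_integral_stock (S mu s : ℝ) :
    ∫ z, (S * Real.exp (mu + s * z)) * phi z = S * Real.exp (mu + s ^ 2 / 2) := by
  have hsplit : ∀ z : ℝ, (S * Real.exp (mu + s * z)) * phi z
      = (S * Real.exp mu) * (Real.exp (s * z) * phi z) := by
    intro z; rw [Real.exp_add]; ring
  simp_rw [hsplit]
  rw [MeasureTheory.integral_const_mul, my_integral_exp_mul_phi, Real.exp_add]
  ring

lemma my_cont_stock (S mu s : ℝ) : Continuous fun z : ℝ => S * Real.exp (mu + s * z) := by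
  fun_prop

lemma my_integrable_call (S K mu s : ℝ) (hS : 0 < S) (hK : 0 < K) :
    Integrable (fun z => max (S * Real.exp (mu + s * z) - K) 0 * phi z) := by
  apply Integrable.mono ((my_integrable_exp_mul_phi s).const_mul (S * Real.exp mu))
  · exact ((((my_cont_stock S mu s).sub continuous_const).max continuous_const).mul
      my_phi_cont).aestronglyMeasurable
  · apply Filter.Eventually.of_forall
    intro z
    have hphi := my_phi_pos z
    have h1 : (0:ℝ) ≤ max (S * Real.exp (mu + s * z) - K) 0 := le_max_right _ _
    rw [Real.norm_eq_abs, Real.norm_eq_abs, abs_of_nonneg (by positivity),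
      abs_of_nonneg (by positivity)]
    have h2 : max (S * Real.exp (mu + s * z) - K) 0 ≤ S * Real.exp (mu + s * z) := by
      apply max_le _ (by positivity)
      nlinarith [Real.exp_pos (mu + s * z)]
    calc max (S * Real.exp (mu + s * z) - K) 0 * phi z
        ≤ (S * Real.exp (mu + s * z)) * phi z := by nlinarith
      _ = S * Real.exp mu * (Real.exp (s * z) * phi z) := by rw [Real.exp_add]; ring

lemma my_integrable_put (S K mu s : ℝ) (hS : 0 < S) (hK : 0 < K) :
    Integrable (fun z => max (K - S * Real.exp (mu + s * z)) 0 * phi z) := by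
  apply Integrable.mono (my_integrable_phi.const_mul K)
  · exact (((continuous_const.sub (my_cont_stock S mu s)).max continuous_const).mul
      my_phi_cont).aestronglyMeasurable
  · apply Filter.Eventually.of_forall
    intro z
    have hphi := my_phi_pos z
    have h1 : (0:ℝ) ≤ max (K - S * Real.exp (mu + s * z)) 0 := le_max_right _ _
    rw [Real.norm_eq_abs, Real.norm_eq_abs, abs_of_nonneg (by positivity),
      abs_of_nonneg (by positivity)]
    have h2 : max (K - S * Real.exp (mu + s * z)) 0 ≤ K := by
      apply max_le _ hK.le
      nlinarith [Real.exp_pos (mu + s * z), hK, hS]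
    exact mul_le_mul_of_nonneg_right h2 hphi.le

lemma my_integrable_stock (S mu s : ℝ) :
    Integrable (fun z => (S * Real.exp (mu + s * z)) * phi z) := by
  have hsplit : ∀ z : ℝ, (S * Real.exp (mu + s * z)) * phi z
      = (S * Real.exp mu) * (Real.exp (s * z) * phi z) := by
    intro z; rw [Real.exp_add]; ring
  simp_rw [hsplit]
  exact (my_integrable_exp_mul_phi s).const_mul _

lemma my_integral_put (S K mu s : ℝ) (hS : 0 < S) (hK : 0 < K) (hs : 0 < s) :
    ∫ z, max (K - S * Real.exp (mu + s * z)) 0 * phi z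
      = (S * Real.exp (mu + s ^ 2 / 2) * Phi ((Real.log (S / K) + mu) / s + s)
        - K * Phi ((Real.log (S / K) + mu) / s)) + K - S * Real.exp (mu + s ^ 2 / 2) := by
  have hparity : ∀ z : ℝ, max (K - S * Real.exp (mu + s * z)) 0 * phi z
      = max (S * Real.exp (mu + s * z) - K) 0 * phi z + K * phi z
        - (S * Real.exp (mu + s * z)) * phi z := by
    intro z
    have : max (K - S * Real.exp (mu + s * z)) 0
        = max (S * Real.exp (mu + s * z) - K) 0 + K - S * Real.exp (mu + s * z) := by
      rcases le_total (S * Real.exp (mu + s * z)) K with h | h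
      · rw [max_eq_left (by linarith), max_eq_right (by linarith)]; ring
      · rw [max_eq_right (by linarith), max_eq_left (by linarith)]; ring
    rw [this]; ring
  simp_rw [hparity]
  have hI1 : Integrable (fun z => max (S * Real.exp (mu + s * z) - K) 0 * phi z + K * phi z) :=
    (my_integrable_call S K mu s hS hK).add (my_integrable_phi.const_mul K)
  rw [MeasureTheory.integral_sub hI1 (my_integrable_stock S mu s),
    MeasureTheory.integral_add (my_integrable_call S K mu s hS hK)
      (my_integrable_phi.const_mul K),
    my_integral_call S K mu s hS hK hs, my_integral_stock,
    MeasureTheory.integral_const_mul, my_integral_phi]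
  ring

noncomputable def myDD (S₀ K σ T α : ℝ) : ℝ :=
  (Real.log (S₀ / K) + (α + σ ^ 2 / 2) * T) / (σ * Real.sqrt T)

noncomputable def myCC (S₀ K σ T α : ℝ) : ℝ :=
  S₀ * Real.exp (α * T) * Phi (myDD S₀ K σ T α)
    - K * Phi (myDD S₀ K σ T α - σ * Real.sqrt T)

noncomputable def myGG (S₀ Kp Kc σ T μp μc α : ℝ) : ℝ :=
  μp * (myCC S₀ Kp σ T α + Kp - S₀ * Real.exp (α * T)) + μc * myCC S₀ Kc σ T α

lemma my_gg_eq (S₀ Kp Kc σ T μp μc : ℝ) (hS : 0 < S₀) (hKp : 0 < Kp) (hKc : 0 < Kc)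
    (hσ : 0 < σ) (hT : 0 < T) (α : ℝ) :
    ∫ z, phi z * (μp * max (Kp - S₀ * Real.exp (α * T - σ ^ 2 * T / 2 + σ * Real.sqrt T * z)) 0
        + μc * max (S₀ * Real.exp (α * T - σ ^ 2 * T / 2 + σ * Real.sqrt T * z) - Kc) 0)
      = myGG S₀ Kp Kc σ T μp μc α := by
  set s := σ * Real.sqrt T with hsdef
  have hs : 0 < s := by rw [hsdef]; positivity
  set mu := α * T - σ ^ 2 * T / 2 with hmudef
  have hsq : s ^ 2 = σ ^ 2 * T := by
    rw [hsdef, mul_pow, Real.sq_sqrt hT.le]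
  have hpt : ∀ z : ℝ, phi z * (μp * max (Kp - S₀ * Real.exp (mu + s * z)) 0
      + μc * max (S₀ * Real.exp (mu + s * z) - Kc) 0)
      = μp * (max (Kp - S₀ * Real.exp (mu + s * z)) 0 * phi z)
        + μc * (max (S₀ * Real.exp (mu + s * z) - Kc) 0 * phi z) := by
    intro z; ring
  simp_rw [hpt]
  rw [MeasureTheory.integral_add ((my_integrable_put S₀ Kp mu s hS hKp).const_mul μp)
      ((my_integrable_call S₀ Kc mu s hS hKc).const_mul μc),
    MeasureTheory.integral_const_mul, MeasureTheory.integral_const_mul,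
    my_integral_put S₀ Kp mu s hS hKp hs, my_integral_call S₀ Kc mu s hS hKc hs]
  have hA : ∀ K : ℝ, (Real.log (S₀ / K) + mu) / s + s = myDD S₀ K σ T α := by
    intro K
    rw [myDD, hmudef, ← hsdef, eq_div_iff hs.ne', add_mul, div_mul_cancel₀ _ hs.ne']
    linear_combination hsq
  have hB : ∀ K : ℝ, (Real.log (S₀ / K) + mu) / s = myDD S₀ K σ T α - s := by
    intro K
    have := hA K
    linarith
  have hmu : mu + s ^ 2 / 2 = α * T := by rw [hmudef, hsq]; ring
  rw [hA Kp, hB Kp, hA Kc, hB Kc, hmu, myGG, myCC, myCC]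

lemma my_hasDerivAt_DD (S₀ K σ T : ℝ) (α : ℝ) :
    HasDerivAt (fun x => myDD S₀ K σ T x) (T / (σ * Real.sqrt T)) α := by
  have h := ((((hasDerivAt_id α).add_const (σ ^ 2 / 2)).mul_const T).const_add
    (Real.log (S₀ / K))).div_const (σ * Real.sqrt T)
  refine h.congr_deriv ?_
  ring

lemma my_phi_identity (S₀ K σ T α : ℝ) (hS : 0 < S₀) (hK : 0 < K) (hσ : 0 < σ) (hT : 0 < T) :
    S₀ * Real.exp (α * T) * phi (myDD S₀ K σ T α)
      = K * phi (myDD S₀ K σ T α - σ * Real.sqrt T) := by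
  set s := σ * Real.sqrt T with hsdef
  have hs : 0 < s := by rw [hsdef]; positivity
  set d := myDD S₀ K σ T α with hddef
  have hds : d * s = Real.log (S₀ / K) + (α + σ ^ 2 / 2) * T := by
    rw [hddef, myDD, ← hsdef, div_mul_cancel₀ _ hs.ne']
  have hsq : s ^ 2 = σ ^ 2 * T := by rw [hsdef, mul_pow, Real.sq_sqrt hT.le]
  have he : Real.exp (-((d - s) ^ 2) / 2)
      = Real.exp (-(d ^ 2) / 2) * Real.exp (d * s - s ^ 2 / 2) := by
    rw [← Real.exp_add]; ring_nf
  have he2 : Real.exp (d * s - s ^ 2 / 2) = (S₀ / K) * Real.exp (α * T) := by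
    rw [hds, hsq, show Real.log (S₀ / K) + (α + σ ^ 2 / 2) * T - σ ^ 2 * T / 2
      = Real.log (S₀ / K) + α * T by ring, Real.exp_add, Real.exp_log (div_pos hS hK)]
  unfold phi
  rw [he, he2]
  field_simp

lemma my_hasDerivAt_CC (S₀ K σ T α : ℝ) (hS : 0 < S₀) (hK : 0 < K) (hσ : 0 < σ) (hT : 0 < T) :
    HasDerivAt (fun x => myCC S₀ K σ T x)
      (T * S₀ * Real.exp (α * T) * Phi (myDD S₀ K σ T α)) α := by
  set s := σ * Real.sqrt T with hsdef
  have hs : 0 < s := by rw [hsdef]; positivity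
  have hE : HasDerivAt (fun x : ℝ => Real.exp (x * T)) (Real.exp (α * T) * (1 * T)) α :=
    ((hasDerivAt_id α).mul_const T).exp
  have hD := my_hasDerivAt_DD S₀ K σ T α
  have hP1 : HasDerivAt (fun x => Phi (myDD S₀ K σ T x))
      (phi (myDD S₀ K σ T α) * (T / s)) α := (my_hasDerivAt_Phi _).comp α hD
  have hP2 : HasDerivAt (fun x => Phi (myDD S₀ K σ T x - s))
      (phi (myDD S₀ K σ T α - s) * (T / s)) α := (my_hasDerivAt_Phi _).comp α (hD.sub_const s)
  have h1 := ((hE.const_mul S₀).mul hP1).sub (hP2.const_mul K)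
  have hident := my_phi_identity S₀ K σ T α hS hK hσ hT
  have heq : (fun x => myCC S₀ K σ T x) = fun x =>
      S₀ * Real.exp (x * T) * Phi (myDD S₀ K σ T x) - K * Phi (myDD S₀ K σ T x - s) := by
    funext x; rw [myCC, hsdef]
  rw [heq]
  refine h1.congr_deriv ?_
  linear_combination (T / s) * hident

lemma my_hasDerivAt_GG (S₀ Kp Kc σ T μp μc α : ℝ) (hS : 0 < S₀) (hKp : 0 < Kp) (hKc : 0 < Kc)
    (hσ : 0 < σ) (hT : 0 < T) :
    HasDerivAt (fun x => myGG S₀ Kp Kc σ T μp μc x)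
      (T * S₀ * Real.exp (α * T)
        * (μc * Phi (myDD S₀ Kc σ T α) - μp * (1 - Phi (myDD S₀ Kp σ T α)))) α := by
  have hE : HasDerivAt (fun x : ℝ => S₀ * Real.exp (x * T)) (S₀ * (Real.exp (α * T) * (1 * T))) α :=
    (((hasDerivAt_id α).mul_const T).exp).const_mul S₀
  have hCp := my_hasDerivAt_CC S₀ Kp σ T α hS hKp hσ hT
  have hCc := my_hasDerivAt_CC S₀ Kc σ T α hS hKc hσ hT
  have h := (((hCp.add_const Kp).sub hE).const_mul μp).add (hCc.const_mul μc)
  refine h.congr_deriv ?_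
  ring

lemma my_psi_strictMono (S₀ Kp Kc σ T μp μc : ℝ) (hσ : 0 < σ) (hT : 0 < T)
    (hμp : 0 < μp) (hμc : 0 < μc) :
    StrictMono (fun x => μc * Phi (myDD S₀ Kc σ T x) - μp * (1 - Phi (myDD S₀ Kp σ T x))) := by
  intro x y hxy
  have hs : 0 < σ * Real.sqrt T := by positivity
  have hdd : ∀ K : ℝ, myDD S₀ K σ T x < myDD S₀ K σ T y := by
    intro K
    rw [myDD, myDD, div_lt_div_iff_of_pos_right hs]
    nlinarith
  have h1 := my_strictMono_Phi (hdd Kc)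
  have h2 := my_strictMono_Phi (hdd Kp)
  simp only
  nlinarith [mul_lt_mul_of_pos_left h1 hμc, mul_lt_mul_of_pos_left h2 hμp]

lemma my_gg_gt (S₀ Kp Kc σ T μp μc r : ℝ) (hS : 0 < S₀) (hKp : 0 < Kp) (hKc : 0 < Kc)
    (hσ : 0 < σ) (hT : 0 < T) (hμp : 0 < μp) (hμc : 0 < μc)
    (hψr : μc * Phi (myDD S₀ Kc σ T r) - μp * (1 - Phi (myDD S₀ Kp σ T r)) = 0)
    (α : ℝ) (hαr : α ≠ r) :
    myGG S₀ Kp Kc σ T μp μc r < myGG S₀ Kp Kc σ T μp μc α := by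
  set ψ := fun x => μc * Phi (myDD S₀ Kc σ T x) - μp * (1 - Phi (myDD S₀ Kp σ T x)) with hψdef
  have hψmono : StrictMono ψ := my_psi_strictMono S₀ Kp Kc σ T μp μc hσ hT hμp hμc
  have hgderiv := fun x => my_hasDerivAt_GG S₀ Kp Kc σ T μp μc x hS hKp hKc hσ hT
  have hgcont : Continuous (fun x => myGG S₀ Kp Kc σ T μp μc x) :=
    continuous_iff_continuousAt.mpr fun x => (hgderiv x).continuousAt
  rcases lt_or_gt_of_ne hαr with h | h
  · -- α < r : strictly decreasing on [α, r]
    have hanti : StrictAntiOn (fun x => myGG S₀ Kp Kc σ T μp μc x) (Icc α r) := by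
      apply strictAntiOn_of_deriv_neg (convex_Icc α r) hgcont.continuousOn
      intro x hx
      rw [interior_Icc] at hx
      rw [(hgderiv x).deriv]
      have hψx : ψ x < 0 := by
        have h1 := hψmono hx.2
        have h0 : ψ r = 0 := hψr
        linarith
      have hpos : 0 < T * S₀ * Real.exp (x * T) := by positivity
      calc T * S₀ * Real.exp (x * T) * ψ x < T * S₀ * Real.exp (x * T) * 0 := by
            exact mul_lt_mul_of_pos_left hψx hpos
        _ = 0 := by ring
    exact hanti (Set.left_mem_Icc.mpr h.le) (Set.right_mem_Icc.mpr h.le) h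
  · -- r < α : strictly increasing on [r, α]
    have hmono : StrictMonoOn (fun x => myGG S₀ Kp Kc σ T μp μc x) (Icc r α) := by
      apply strictMonoOn_of_deriv_pos (convex_Icc r α) hgcont.continuousOn
      intro x hx
      rw [interior_Icc] at hx
      rw [(hgderiv x).deriv]
      have hψx : 0 < ψ x := by
        have h1 := hψmono hx.1
        have h0 : ψ r = 0 := hψr
        linarith
      have hpos : 0 < T * S₀ * Real.exp (x * T) := by positivity
      exact mul_pos hpos hψx
    exact hmono (Set.left_mem_Icc.mpr h.le) (Set.right_mem_Icc.mpr h.le) h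

lemma my_pdf_eq : gaussianPDFReal 0 1 = phi := by
  funext x
  rw [gaussianPDFReal, phi]
  norm_num

lemma my_integral_gaussian_eq (f : ℝ → ℝ) :
    ∫ x, f x ∂(gaussianReal 0 1) = ∫ x, phi x * f x := by
  rw [gaussianReal_of_var_ne_zero 0 one_ne_zero]
  have hpdf : gaussianPDF 0 1 = fun x => ((Real.toNNReal (phi x) : NNReal) : ENNReal) := by
    funext x
    rw [gaussianPDF, my_pdf_eq, ENNReal.ofReal]
  rw [hpdf, integral_withDensity_eq_integral_smul
    (by exact (my_phi_cont.measurable).real_toNNReal) f]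
  congr 1
  funext x
  rw [NNReal.smul_def, Real.coe_toNNReal _ (my_phi_pos x).le]
  rfl

lemma my_dd_r (S₀ K σ T r : ℝ) : myDD S₀ K σ T r = dBS S₀ K r T σ := by
  rw [myDD, dBS]; ring_nf

lemma my_gg_r (S₀ Kp Kc σ T μp μc r : ℝ) :
    myGG S₀ Kp Kc σ T μp μc r
      = Real.exp (r * T) * (μp * putBS S₀ Kp r T σ + μc * callBS S₀ Kc r T σ) := by
  have he : Real.exp (-(r * T)) * Real.exp (r * T) = 1 := by
    rw [← Real.exp_add]; simp
  rw [myGG, myCC, myCC, my_dd_r, my_dd_r, putBS, callBS, callBS]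
  linear_combination (μc * Kc * Phi (dBS S₀ Kc r T σ - σ * Real.sqrt T)
    - μp * Kp * (1 - Phi (dBS S₀ Kp r T σ - σ * Real.sqrt T))) * he

theorem stmt18 {Ω : Type*} [MeasurableSpace Ω] (P : Measure Ω) [IsProbabilityMeasure P]
    (a Z : Ω → ℝ) (hZmeas : Measurable Z) (hameas : Measurable a)
    (hZ : Measure.map Z P = gaussianReal 0 1) (hindep : IndepFun a Z P)
    (S₀ Kp Kc σ T r μp μc : ℝ) (hS : 0 < S₀) (hKp : 0 < Kp) (hKc : 0 < Kc)
    (hσ : 0 < σ) (hT : 0 < T) (hr : 0 ≤ r) (hμp : 0 < μp) (hμc : 0 < μc)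
    (hne : 0 < P {ω | a ω ≠ r})
    (hratio : μc / μp = (1 - Phi (dBS S₀ Kp r T σ)) / Phi (dBS S₀ Kc r T σ))
    (hint : Integrable (fun ω =>
      μp * max (Kp - S₀ * Real.exp (a ω * T - σ ^ 2 * T / 2 + σ * Real.sqrt T * Z ω)) 0 +
      μc * max (S₀ * Real.exp (a ω * T - σ ^ 2 * T / 2 + σ * Real.sqrt T * Z ω) - Kc) 0) P) :
    (∫ ω, (μp * max (Kp - S₀ * Real.exp (a ω * T - σ ^ 2 * T / 2 + σ * Real.sqrt T * Z ω)) 0 +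
           μc * max (S₀ * Real.exp (a ω * T - σ ^ 2 * T / 2 + σ * Real.sqrt T * Z ω) - Kc) 0)
        ∂P) >
      Real.exp (r * T) * (μp * putBS S₀ Kp r T σ + μc * callBS S₀ Kc r T σ) := by
  classical
  set F : ℝ × ℝ → ℝ := fun q =>
    μp * max (Kp - S₀ * Real.exp (q.1 * T - σ ^ 2 * T / 2 + σ * Real.sqrt T * q.2)) 0 +
    μc * max (S₀ * Real.exp (q.1 * T - σ ^ 2 * T / 2 + σ * Real.sqrt T * q.2) - Kc) 0 with hFdef
  have hFcont : Continuous F := by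
    rw [hFdef]; fun_prop
  have hpair : AEMeasurable (fun ω => (a ω, Z ω)) P := (hameas.prodMk hZmeas).aemeasurable
  have hmap : Measure.map (fun ω => (a ω, Z ω)) P
      = (Measure.map a P).prod (gaussianReal 0 1) := by
    rw [← hZ]
    exact (indepFun_iff_map_prod_eq_prod_map_map hameas.aemeasurable hZmeas.aemeasurable).mp hindep
  have hint' : Integrable (fun ω => F (a ω, Z ω)) P := hint
  have hFint : Integrable F ((Measure.map a P).prod (gaussianReal 0 1)) := by
    rw [← hmap]
    exact (integrable_map_measure hFcont.aestronglyMeasurable hpair).mpr hint'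
  have hLHS : ∫ ω, F (a ω, Z ω) ∂P = ∫ q, F q ∂((Measure.map a P).prod (gaussianReal 0 1)) := by
    rw [← hmap, integral_map hpair hFcont.aestronglyMeasurable]
  have hFub : ∫ q, F q ∂((Measure.map a P).prod (gaussianReal 0 1))
      = ∫ x, ∫ z, F (x, z) ∂(gaussianReal 0 1) ∂(Measure.map a P) :=
    MeasureTheory.integral_prod F hFint
  have hinner : ∀ x : ℝ, ∫ z, F (x, z) ∂(gaussianReal 0 1) = myGG S₀ Kp Kc σ T μp μc x := by
    intro x
    rw [my_integral_gaussian_eq]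
    exact my_gg_eq S₀ Kp Kc σ T μp μc hS hKp hKc hσ hT x
  have hggcont : Continuous (fun x => myGG S₀ Kp Kc σ T μp μc x) :=
    continuous_iff_continuousAt.mpr fun x =>
      (my_hasDerivAt_GG S₀ Kp Kc σ T μp μc x hS hKp hKc hσ hT).continuousAt
  have hgg_int : Integrable (fun x => myGG S₀ Kp Kc σ T μp μc x) (Measure.map a P) :=
    hFint.integral_prod_left.congr (Filter.Eventually.of_forall hinner)
  have hcomp_int : Integrable (fun ω => myGG S₀ Kp Kc σ T μp μc (a ω)) P :=
    (integrable_map_measure hggcont.aestronglyMeasurable hameas.aemeasurable).mp hgg_int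
  have hpull : ∫ x, myGG S₀ Kp Kc σ T μp μc x ∂(Measure.map a P)
      = ∫ ω, myGG S₀ Kp Kc σ T μp μc (a ω) ∂P :=
    integral_map hameas.aemeasurable hggcont.aestronglyMeasurable
  -- ratio condition
  have hΦc : 0 < Phi (dBS S₀ Kc r T σ) := my_Phi_pos _
  have hψr : μc * Phi (myDD S₀ Kc σ T r) - μp * (1 - Phi (myDD S₀ Kp σ T r)) = 0 := by
    rw [my_dd_r, my_dd_r]
    rw [div_eq_div_iff hμp.ne' hΦc.ne'] at hratio
    linarith
  have hgt : ∀ α : ℝ, α ≠ r → myGG S₀ Kp Kc σ T μp μc r < myGG S₀ Kp Kc σ T μp μc α :=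
    fun α hα => my_gg_gt S₀ Kp Kc σ T μp μc r hS hKp hKc hσ hT hμp hμc hψr α hα
  have hge : ∀ α : ℝ, myGG S₀ Kp Kc σ T μp μc r ≤ myGG S₀ Kp Kc σ T μp μc α := by
    intro α
    by_cases hα : α = r
    · rw [hα]
    · exact (hgt α hα).le
  -- rewrite the goal
  have hgoal : (∫ ω, (μp * max (Kp - S₀ * Real.exp (a ω * T - σ ^ 2 * T / 2 + σ * Real.sqrt T * Z ω)) 0 +
           μc * max (S₀ * Real.exp (a ω * T - σ ^ 2 * T / 2 + σ * Real.sqrt T * Z ω) - Kc) 0) ∂P)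
      = ∫ ω, myGG S₀ Kp Kc σ T μp μc (a ω) ∂P := by
    have h1 : (∫ ω, (μp * max (Kp - S₀ * Real.exp (a ω * T - σ ^ 2 * T / 2 + σ * Real.sqrt T * Z ω)) 0 +
           μc * max (S₀ * Real.exp (a ω * T - σ ^ 2 * T / 2 + σ * Real.sqrt T * Z ω) - Kc) 0) ∂P)
        = ∫ ω, F (a ω, Z ω) ∂P := rfl
    rw [h1, hLHS, hFub]
    simp_rw [hinner]
    exact hpull
  rw [hgoal, ← my_gg_r]
  -- strict inequality
  have key : 0 < ∫ ω, (myGG S₀ Kp Kc σ T μp μc (a ω) - myGG S₀ Kp Kc σ T μp μc r) ∂P := by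
    rw [MeasureTheory.integral_pos_iff_support_of_nonneg_ae
      (Filter.Eventually.of_forall fun ω => sub_nonneg.mpr (hge (a ω)))
      (hcomp_int.sub (integrable_const _))]
    refine lt_of_lt_of_le hne (measure_mono ?_)
    intro ω hω
    simp only [Function.mem_support]
    exact sub_ne_zero.mpr (hgt (a ω) hω).ne'
  rw [MeasureTheory.integral_sub hcomp_int (integrable_const _),
    MeasureTheory.integral_const, probReal_univ] at key
  simp at key
  linarith
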